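/- Let S be the group with presentation ⟨d, c, f, e, h, a | d^{2^{k-1}} = c^{2^{k-1}} = f² = e² = a² = 1, [d,c] = [f,e] = 1, d^f = d⁻¹, c^e = c⁻¹, c^a = d, e^a = f, h² = d·d^{2^{k-2}}·c^{2^{k-2}}, e^h = ec, h^a = feh⟩ with k ≥ 3, and let J = ⟨c, e, d, f⟩ and x = d^{2^{k-2}}, z = c^{2^{k-2}}. Then the coset Jh contains no involutions, i.e. for all j ∈ J, (jh)² ≠ 1. -/
import Mathlib


namespace Stmt13

/-- Generators `d, c, f, e, h, a` indexed by `Fin 6` (in that order). -/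
def dg : FreeGroup (Fin 6) := FreeGroup.of 0
def cg : FreeGroup (Fin 6) := FreeGroup.of 1
def fg : FreeGroup (Fin 6) := FreeGroup.of 2
def eg : FreeGroup (Fin 6) := FreeGroup.of 3
def hg : FreeGroup (Fin 6) := FreeGroup.of 4
def ag : FreeGroup (Fin 6) := FreeGroup.of 5

/-- Relators of the presentation
`⟨d,c,f,e,h,a ∣ d^{2^{k-1}} = c^{2^{k-1}} = f² = e² = a² = 1, [d,c] = [f,e] = 1,
d^f = d⁻¹, c^e = c⁻¹, c^a = d, e^a = f,
h² = d·d^{2^{k-2}}·c^{2^{k-2}}, e^h = ec, h^a = feh⟩`. -/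
def rels (k : ℕ) : Set (FreeGroup (Fin 6)) :=
  {dg ^ 2 ^ (k - 1), cg ^ 2 ^ (k - 1), fg ^ 2, eg ^ 2, ag ^ 2,
   dg * cg * dg⁻¹ * cg⁻¹, fg * eg * fg⁻¹ * eg⁻¹,
   fg⁻¹ * dg * fg * dg,
   eg⁻¹ * cg * eg * cg,
   ag⁻¹ * cg * ag * dg⁻¹,
   ag⁻¹ * eg * ag * fg⁻¹,
   hg ^ 2 * (dg * dg ^ 2 ^ (k - 2) * cg ^ 2 ^ (k - 2))⁻¹,
   hg⁻¹ * eg * hg * (eg * cg)⁻¹,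
   ag⁻¹ * hg * ag * (fg * eg * hg)⁻¹}

/-- The group `S` with the above presentation. -/
abbrev S (k : ℕ) := PresentedGroup (rels k)

def d (k : ℕ) : S k := PresentedGroup.of 0
def c (k : ℕ) : S k := PresentedGroup.of 1
def f (k : ℕ) : S k := PresentedGroup.of 2
def e (k : ℕ) : S k := PresentedGroup.of 3
def h (k : ℕ) : S k := PresentedGroup.of 4
def a (k : ℕ) : S k := PresentedGroup.of 5

/-- `J = ⟨c, e, d, f⟩`. -/
def J (k : ℕ) : Subgroup (S k) := Subgroup.closure {c k, e k, d k, f k}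

/-! ### Auxiliary model: affine maps with a possible coordinate swap on `(ZMod 2^(m+3))²` -/

abbrev R (m : ℕ) := ZMod (2 ^ (m + 3))

lemma hpow (m : ℕ) : (2 : R m) ^ (m + 3) = 0 := by
  have : ((2 ^ (m + 3) : ℕ) : R m) = 0 := ZMod.natCast_self _
  push_cast at this
  exact this

/-- multiplier: `1` or `v = 2^(m+2) - 1`. -/
def U (m : ℕ) : Bool → R m
  | false => 1
  | true => 2 ^ (m + 2) - 1

lemma U_sq (m : ℕ) (b : Bool) : U m b * U m b = 1 := by
  cases b
  · simp [U]
  · show ((2 : R m) ^ (m + 2) - 1) * ((2 : R m) ^ (m + 2) - 1) = 1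
    linear_combination (2 * (2 : R m) ^ m - 1) * hpow m

lemma U_mul (m : ℕ) (b b' : Bool) : U m (xor b b') = U m b * U m b' := by
  cases b <;> cases b' <;> simp [U]
  · exact (U_sq m true).symm

/-- the affine permutation `(x, y) ↦ (U b₁ * x + t₁, U b₂ * y + t₂)`. -/
def A (m : ℕ) (b1 : Bool) (t1 : R m) (b2 : Bool) (t2 : R m) :
    Equiv.Perm (R m × R m) where
  toFun p := (U m b1 * p.1 + t1, U m b2 * p.2 + t2)
  invFun p := (U m b1 * p.1 - U m b1 * t1, U m b2 * p.2 - U m b2 * t2)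
  left_inv p := by
    obtain ⟨x, y⟩ := p
    have h1 := U_sq m b1; have h2 := U_sq m b2
    simp only [Prod.mk.injEq]
    constructor
    · linear_combination x * h1
    · linear_combination y * h2
  right_inv p := by
    obtain ⟨x, y⟩ := p
    have h1 := U_sq m b1; have h2 := U_sq m b2
    simp only [Prod.mk.injEq]
    constructor
    · linear_combination (x - t1) * h1
    · linear_combination (y - t2) * h2

lemma A_apply (m : ℕ) (b1 : Bool) (t1 : R m) (b2 : Bool) (t2 : R m) (p : R m × R m) :
    A m b1 t1 b2 t2 p = (U m b1 * p.1 + t1, U m b2 * p.2 + t2) := rfl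

lemma A_congr (m : ℕ) {b1 b2 : Bool} {t1 t2 s1 s2 : R m} (h1 : t1 = s1) (h2 : t2 = s2) :
    A m b1 t1 b2 t2 = A m b1 s1 b2 s2 := by rw [h1, h2]

lemma A_one (m : ℕ) : A m false 0 false 0 = 1 := by
  ext p <;> simp [A_apply, U]

lemma A_eq_one (m : ℕ) {t1 t2 : R m} (h1 : t1 = 0) (h2 : t2 = 0) :
    A m false t1 false t2 = 1 := by rw [h1, h2, A_one]

lemma A_mul (m : ℕ) (b1 : Bool) (t1 : R m) (b2 : Bool) (t2 : R m)
    (c1 : Bool) (s1 : R m) (c2 : Bool) (s2 : R m) :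
    A m b1 t1 b2 t2 * A m c1 s1 c2 s2 =
      A m (xor b1 c1) (U m b1 * s1 + t1) (xor b2 c2) (U m b2 * s2 + t2) := by
  ext p
  · simp [A_apply, Equiv.Perm.mul_apply, U_mul]; ring
  · simp [A_apply, Equiv.Perm.mul_apply, U_mul]; ring

lemma A_mul' (m : ℕ) (b1 : Bool) (t1 : R m) (b2 : Bool) (t2 : R m)
    (c1 : Bool) (s1 : R m) (c2 : Bool) (s2 : R m) (x : Equiv.Perm (R m × R m)) :
    A m b1 t1 b2 t2 * (A m c1 s1 c2 s2 * x) =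
      A m (xor b1 c1) (U m b1 * s1 + t1) (xor b2 c2) (U m b2 * s2 + t2) * x := by
  rw [← mul_assoc, A_mul]

lemma A_inv (m : ℕ) (b1 : Bool) (t1 : R m) (b2 : Bool) (t2 : R m) :
    (A m b1 t1 b2 t2)⁻¹ = A m b1 (-(U m b1 * t1)) b2 (-(U m b2 * t2)) := by
  apply inv_eq_of_mul_eq_one_right
  rw [A_mul]
  simp only [Bool.xor_self]
  apply A_eq_one m
  · linear_combination (-t1) * U_sq m b1
  · linear_combination (-t2) * U_sq m b2

lemma A_pow (m : ℕ) (t1 t2 : R m) (N : ℕ) :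
    (A m false t1 false t2) ^ N = A m false (N * t1) false (N * t2) := by
  induction N with
  | zero => simp [A_one]
  | succ n ih =>
      rw [pow_succ, ih, A_mul]
      apply A_congr <;> simp [U] <;> push_cast <;> ring

def aP (m : ℕ) : Equiv.Perm (R m × R m) := Equiv.prodComm (R m) (R m)

lemma aP_mul_aP (m : ℕ) : aP m * aP m = 1 := by
  ext p <;> simp [aP, Equiv.Perm.mul_apply]

lemma aP_mul_aP' (m : ℕ) (x : Equiv.Perm (R m × R m)) : aP m * (aP m * x) = x := by
  rw [← mul_assoc, aP_mul_aP, one_mul]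

lemma aP_inv (m : ℕ) : (aP m)⁻¹ = aP m :=
  inv_eq_of_mul_eq_one_right (aP_mul_aP m)

lemma aP_mul_A (m : ℕ) (c1 : Bool) (s1 : R m) (c2 : Bool) (s2 : R m) :
    aP m * A m c1 s1 c2 s2 = A m c2 s2 c1 s1 * aP m := by
  ext p <;> simp [aP, A_apply, Equiv.Perm.mul_apply]

lemma aP_mul_A' (m : ℕ) (c1 : Bool) (s1 : R m) (c2 : Bool) (s2 : R m)
    (x : Equiv.Perm (R m × R m)) :
    aP m * (A m c1 s1 c2 s2 * x) = A m c2 s2 c1 s1 * (aP m * x) := by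
  rw [← mul_assoc, aP_mul_A, mul_assoc]

/-- images of the six generators -/
def gens (m : ℕ) : Fin 6 → Equiv.Perm (R m × R m) :=
  ![A m false 0 false 2,                                  -- d
    A m false 2 false 0,                                  -- c
    A m false 0 true 0,                                   -- f
    A m true 0 false 0,                                   -- e
    A m true (2 ^ (m + 1) - 1) false (2 ^ (m + 1) + 1),   -- h
    aP m]                                                  -- a

lemma gens0 (m : ℕ) : gens m 0 = A m false 0 false 2 := rfl
lemma gens1 (m : ℕ) : gens m 1 = A m false 2 false 0 := rfl
lemma gens2 (m : ℕ) : gens m 2 = A m false 0 true 0 := rfl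
lemma gens3 (m : ℕ) : gens m 3 = A m true 0 false 0 := rfl
lemma gens4 (m : ℕ) : gens m 4 = A m true (2 ^ (m + 1) - 1) false (2 ^ (m + 1) + 1) := rfl
lemma gens5 (m : ℕ) : gens m 5 = aP m := rfl

lemma hrels (m : ℕ) : ∀ r ∈ rels (m + 3), (FreeGroup.lift (gens m)) r = 1 := by
  have e1 : m + 3 - 1 = m + 2 := rfl
  have e2 : m + 3 - 2 = m + 1 := rfl
  intro r hr
  simp only [rels, e1, e2, Set.mem_insert_iff, Set.mem_singleton_iff] at hr
  have hp := hpow m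
  rcases hr with rfl | rfl | rfl | rfl | rfl | rfl | rfl | rfl | rfl | rfl | rfl | rfl | rfl | rfl <;>
    simp only [dg, cg, fg, eg, hg, ag, map_mul, map_pow, map_inv, FreeGroup.lift_apply_of,
      gens0, gens1, gens2, gens3, gens4, gens5, mul_inv_rev, A_inv, aP_inv,
      A_pow, pow_two, mul_assoc, aP_mul_A, aP_mul_A', aP_mul_aP, aP_mul_aP',
      A_mul, A_mul', mul_one, one_mul, Bool.xor_false, Bool.xor_true, Bool.not_true,
      Bool.not_false]
  all_goals try simp only [U]
  all_goals try apply A_eq_one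
  all_goals push_cast
  all_goals try ring
  · linear_combination hp
  · linear_combination hp
  · linear_combination (-1 + 4*(2:R m)^m) * hp
  · linear_combination (-1 + 4*(2:R m)^m) * hp
  · linear_combination (-1 + 5*(2:R m)^m - 8*(2:R m)^(m*2)) * hp
  · linear_combination (-1 + 7*(2:R m)^m - 12*(2:R m)^(m*2)) * hp
  · linear_combination (1 - (2:R m)^m) * hp
  · linear_combination (-(2:R m)^m) * hp

/-- the homomorphism to the model -/
noncomputable def ψ (m : ℕ) : S (m + 3) →* Equiv.Perm (R m × R m) :=
  PresentedGroup.toGroup (hrels m)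

/-- The subgroup of "no swap, multipliers in {1,v}, even translations" affine maps. -/
def P (m : ℕ) : Subgroup (Equiv.Perm (R m × R m)) where
  carrier := {σ | ∃ b1 b2 s1 s2, σ = A m b1 (2 * s1) b2 (2 * s2)}
  one_mem' := ⟨false, false, 0, 0, by rw [mul_zero, A_one]⟩
  mul_mem' := by
    rintro σ τ ⟨b1, b2, s1, s2, rfl⟩ ⟨c1, c2, r1, r2, rfl⟩
    exact ⟨xor b1 c1, xor b2 c2, U m b1 * r1 + s1, U m b2 * r2 + s2,
      by rw [A_mul]; exact A_congr m (by ring) (by ring)⟩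
  inv_mem' := by
    rintro σ ⟨b1, b2, s1, s2, rfl⟩
    exact ⟨b1, b2, -(U m b1 * s1), -(U m b2 * s2),
      by rw [A_inv]; exact A_congr m (by ring) (by ring)⟩

/-- For `k ≥ 3`, the coset `Jh` contains no involutions: `(jh)² ≠ 1` for all
`j ∈ J`. -/
theorem stmt_13 (k : ℕ) (hk : 3 ≤ k) :
    ∀ j ∈ J k, (j * h k) ^ 2 ≠ 1 := by
  obtain ⟨m, rfl⟩ : ∃ m, k = m + 3 := ⟨k - 3, by omega⟩
  intro j hj hsq
  have hle : J (m + 3) ≤ (P m).comap (ψ m) := by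
    rw [J, Subgroup.closure_le]
    rintro x (rfl | rfl | rfl | rfl)
    · exact ⟨false, false, 1, 0, by
        show ψ m (PresentedGroup.of 1) = _
        rw [ψ, PresentedGroup.toGroup.of, gens1]
        exact A_congr m (by ring) (by ring)⟩
    · exact ⟨true, false, 0, 0, by
        show ψ m (PresentedGroup.of 3) = _
        rw [ψ, PresentedGroup.toGroup.of, gens3]
        exact A_congr m (by ring) (by ring)⟩
    · exact ⟨false, false, 0, 1, by
        show ψ m (PresentedGroup.of 0) = _
        rw [ψ, PresentedGroup.toGroup.of, gens0]
        exact A_congr m (by ring) (by ring)⟩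
    · exact ⟨false, true, 0, 0, by
        show ψ m (PresentedGroup.of 2) = _
        rw [ψ, PresentedGroup.toGroup.of, gens2]
        exact A_congr m (by ring) (by ring)⟩
  obtain ⟨b1, b2, s1, s2, hA⟩ := hle hj
  have hψh : ψ m (h (m + 3)) = A m true (2 ^ (m + 1) - 1) false (2 ^ (m + 1) + 1) := by
    rw [h, ψ, PresentedGroup.toGroup.of, gens4]
  have hcalc : (ψ m j * ψ m (h (m + 3))) ^ 2 = 1 := by
    rw [← map_mul, ← map_pow, hsq, map_one]
  rw [hA, hψh, pow_two, A_mul, A_mul] at hcalc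
  have h2 := congrArg (fun σ : Equiv.Perm (R m × R m) => (σ (0, 0)).2) hcalc
  simp only [A_apply, Equiv.Perm.one_apply, mul_zero, zero_add] at h2
  -- h2 : U (xor b2 false) * (U b2 * (2^(m+1)+1) + 2*s2) + (U b2 * (2^(m+1)+1) + 2*s2) = 0
  cases b2
  · -- multiplier 1
    have key : (2 : R m) ^ (m + 2) + 2 + 4 * s2 = 0 := by
      simp only [Bool.xor_false, U] at h2
      linear_combination h2
    have := congrArg (ZMod.castHom (show 4 ∣ 2 ^ (m + 3) from ⟨2 ^ (m + 1), by ring⟩) (ZMod 4)) key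
    simp only [map_add, map_pow, map_mul, map_ofNat, map_zero] at this
    rw [show (2 : ZMod 4) ^ (m + 2) = (2 : ZMod 4) ^ m * (2:ZMod 4)^2 from by rw [pow_add],
      show ((2:ZMod 4))^2 = 0 from by decide,
      show ((4:ZMod 4)) = 0 from by decide] at this
    simp at this
    exact absurd this (by decide)
  · -- multiplier v
    have key : (2 : R m) ^ (m + 2) = 0 := by
      simp only [Bool.xor_false, U] at h2
      linear_combination (-1) * h2 +
        ((2 : R m) ^ (2 * m + 2) + (2 : R m) ^ (m + 1) - (2 : R m) ^ m + s2) * hpow m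
    have : ((2 ^ (m + 2) : ℕ) : R m) = 0 := by push_cast; exact key
    rw [ZMod.natCast_eq_zero_iff,
      Nat.pow_dvd_pow_iff_le_right (by norm_num : (1:ℕ) < 2)] at this
    omega


end Stmt13
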